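/- Let A be a commutative ring with an action of a group W, let s, s₀ ∈ W be conjugate elements, say s₀ = b^{-1} s b, and for w ∈ W let I_w ⊂ A ⊗ A be the kernel of the multiplication-twisted map A ⊗ A → A, x ⊗ y ↦ x·w(y). Define R_s = (A ⊗ A)/(I_e ∩ I_s). Then conjugation by the invertible bimodules A_b induces an isomorphism of (A,A)-bimodules A_{b^{-1}} ⊗_A R_s ⊗_A A_b ≅ R_{s₀}. -/

import Mathlib

open TensorProduct

/-- **Conjugating the Soergel bimodule `R_s` by the twisted bimodule `A_b`.**  Let a group
`W` act on a commutative `R`-algebra `A` by algebra automorphisms `ρ`.  For `w ∈ W` let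
`I_w ⊆ A ⊗ A` be the kernel of the multiplication-twisted map `A ⊗ A → A`,
`x ⊗ y ↦ x · ρ w y` (so `A_w = (A ⊗ A)/I_w` is the twisted diagonal bimodule), and let
`R_s = (A ⊗ A)/(I_e ∩ I_s)`.  Conjugation by the invertible bimodule `A_b` acts on
`(A ⊗ A)`-modules through the automorphism `Θ = ρ b ⊗ ρ b` of `A ⊗ A`; for conjugate
elements `s₀ = b⁻¹ s b` one has `Θ⁻¹(I_e ∩ I_s) = I_e ∩ I_{s₀}`, whence an isomorphism of
`(A,A)`-bimodules `A_{b⁻¹} ⊗_A R_s ⊗_A A_b ≅ R_{s₀}`: a ring isomorphism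
`R_{s₀} ≅ R_s` intertwining the `(A ⊗ A)`-module structures through `Θ`. -/
theorem conjugation_of_Rs
    {R A W : Type*} [CommRing R] [CommRing A] [Algebra R A] [Group W]
    (ρ : W →* (A ≃ₐ[R] A)) (s b : W) :
    let f : W → (TensorProduct R A A →ₐ[R] A) := fun w =>
      (Algebra.TensorProduct.lmul' R).comp
        (Algebra.TensorProduct.map (AlgHom.id R A) (ρ w).toAlgHom)
    let I : W → Ideal (TensorProduct R A A) := fun w => RingHom.ker (f w)
    let Θ : TensorProduct R A A ≃ₐ[R] TensorProduct R A A :=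
      Algebra.TensorProduct.congr (ρ b) (ρ b)
    Ideal.comap Θ (I 1 ⊓ I s) = I 1 ⊓ I (b⁻¹ * s * b) ∧
    ∃ e : (TensorProduct R A A ⧸ (I 1 ⊓ I (b⁻¹ * s * b))) ≃+*
          (TensorProduct R A A ⧸ (I 1 ⊓ I s)),
      ∀ z : TensorProduct R A A,
        e (Ideal.Quotient.mk (I 1 ⊓ I (b⁻¹ * s * b)) z) =
          Ideal.Quotient.mk (I 1 ⊓ I s) (Θ z) := by
  intro f I Θ
  have hpt : ∀ (w : W) (z : TensorProduct R A A),
      f w (Θ z) = ρ b (f (b⁻¹ * w * b) z) := by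
    intro w z
    induction z using TensorProduct.induction_on with
    | zero => simp
    | tmul x y =>
        simp only [f, Θ, Algebra.TensorProduct.congr_apply,
          AlgEquiv.toAlgHom_eq_coe, Algebra.TensorProduct.map_tmul,
          AlgHom.comp_apply, AlgHom.coe_id, id_eq, AlgHom.coe_coe,
          Algebra.TensorProduct.lmul'_apply_tmul]
        rw [map_mul (ρ b) x]
        congr 1
        have hmul : ∀ (u v : W) (t : A), ρ u ((ρ v) t) = ρ (u * v) t := by
          intro u v t
          rw [map_mul]
          rfl
        simp only [AlgEquiv.coe_algHom]
        rw [hmul w b, hmul b (b⁻¹ * w * b), show b * (b⁻¹ * w * b) = w * b by group]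
    | add u v hu hv => simp [map_add, hu, hv]
  have key : ∀ w : W, Ideal.comap (Θ : TensorProduct R A A →+* TensorProduct R A A)
      (I w) = I (b⁻¹ * w * b) := by
    intro w
    ext z
    simp only [Ideal.mem_comap, I, RingHom.mem_ker, AlgHom.toRingHom_eq_coe,
      RingHom.coe_coe, AlgEquiv.coe_ringHom_commutes]
    constructor
    · intro h
      have := hpt w z
      rw [show ((f w : TensorProduct R A A →ₐ[R] A) (Θ z)) = 0 from h] at this
      exact (ρ b).injective (by simpa using this.symm)
    · intro h
      rw [hpt w z, h, map_zero]
  have hone : b⁻¹ * 1 * b = 1 := by group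
  have hcap : Ideal.comap (Θ : TensorProduct R A A →+* TensorProduct R A A)
      (I 1 ⊓ I s) = I 1 ⊓ I (b⁻¹ * s * b) := by
    rw [Ideal.comap_inf, key 1, key s, hone]
  refine ⟨hcap, ?_⟩
  have hmap : I 1 ⊓ I s =
      Ideal.map (Θ.toRingEquiv : TensorProduct R A A →+* TensorProduct R A A)
        (I 1 ⊓ I (b⁻¹ * s * b)) := by
    rw [← hcap]
    exact (Ideal.map_comap_of_surjective _ Θ.toRingEquiv.surjective _).symm
  exact ⟨Ideal.quotientEquiv _ _ Θ.toRingEquiv hmap,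
    fun z => Ideal.quotientEquiv_mk _ _ _ hmap z⟩
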